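/- If N is a Midy pseudoprime to base b, then N is a strong pseudoprime to base b. -/

import Mathlib

/-- The multiplicative order of `b` modulo `N`. -/
noncomputable def ord (b N : ℕ) : ℕ := orderOf (b : ZMod N)

/-- `N` is a Midy pseudoprime to base `b`: `N` is odd composite, coprime to `b` and to
`|b|_N`, and `|b|_N = |b|_p` for every prime `p ∣ N` (equivalent characterization). -/
def MidyPsp (b N : ℕ) : Prop :=
  Odd N ∧ 1 < N ∧ ¬ N.Prime ∧ Nat.Coprime N b ∧ Nat.Coprime N (ord b N) ∧
    ∀ p : ℕ, p.Prime → p ∣ N → ord b N = ord b p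

/-- `N` is a strong pseudoprime to base `b`: `N` is odd composite, coprime to `b`, and,
writing `N − 1 = 2^r·s` with `s` odd, `b^s ≡ 1 (mod N)` or `b^{2^i·s} ≡ −1 (mod N)`
for some `0 ≤ i < r`. -/
def StrongPsp (b N : ℕ) : Prop :=
  Odd N ∧ 1 < N ∧ ¬ N.Prime ∧ Nat.Coprime N b ∧
    (b ^ ((N - 1) / 2 ^ padicValNat 2 (N - 1)) ≡ 1 [MOD N] ∨
      ∃ i < padicValNat 2 (N - 1),
        (b : ZMod N) ^ (2 ^ i * ((N - 1) / 2 ^ padicValNat 2 (N - 1))) = -1)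

/-- If every prime divisor of a positive `n` is `≡ 1 [MOD d]`, then so is `n`. -/
lemma modeq_one_of_primes (d : ℕ) : ∀ n, 0 < n →
    (∀ p, p.Prime → p ∣ n → p ≡ 1 [MOD d]) → n ≡ 1 [MOD d] := by
  intro n
  induction n using Nat.strong_induction_on with
  | _ n ih =>
    intro hn hp
    rcases eq_or_lt_of_le (show 1 ≤ n from hn) with h1 | h1
    · exact h1 ▸ Nat.ModEq.refl 1
    · have hn1 : n ≠ 1 := by omega
      have hpm : n.minFac.Prime := Nat.minFac_prime hn1
      have hdvd : n.minFac ∣ n := Nat.minFac_dvd n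
      have h2 : n = n.minFac * (n / n.minFac) := (Nat.mul_div_cancel' hdvd).symm
      have hlt : n / n.minFac < n := Nat.div_lt_self hn hpm.one_lt
      have hpos : 0 < n / n.minFac := Nat.div_pos (Nat.le_of_dvd hn hdvd) hpm.pos
      have hrec := ih _ hlt hpos fun q hq hqd => hp q hq (hqd.trans (Nat.div_dvd_of_dvd hdvd))
      have := (hp _ hpm hdvd).mul hrec
      rw [h2]
      simpa using this

lemma ord_dvd_of_dvd (b m n : ℕ) (h : m ∣ n) : ord b m ∣ ord b n := by
  have := orderOf_map_dvd (ZMod.castHom h (ZMod m)).toMonoidHom ((b : ℕ) : ZMod n)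
  simpa [ord] using this

/-- In `ZMod (p^k)` with `p` an odd prime, the only square roots of `1` are `±1`. -/
lemma eq_neg_one_of_sq (p k : ℕ) [hp : Fact p.Prime] (hp2 : p ≠ 2) (hk : k ≠ 0)
    (z : ZMod (p ^ k)) (h1 : z ^ 2 = 1) (h2 : z ≠ 1) : z = -1 := by
  haveI : NeZero (p ^ k) := ⟨pow_ne_zero k hp.out.pos.ne'⟩
  set f : ZMod (p ^ k) →+* ZMod p := ZMod.castHom (dvd_pow_self p hk) (ZMod p) with hf
  have hunit : ∀ x : ZMod (p ^ k), f x ≠ 0 → IsUnit x := by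
    intro x hx
    have hxv : ((x.val : ℕ) : ZMod (p ^ k)) = x := ZMod.natCast_zmod_val x
    have hfx : f x = ((x.val : ℕ) : ZMod p) := by
      conv_lhs => rw [← hxv]
      exact map_natCast f x.val
    rw [hfx, Ne, ZMod.natCast_eq_zero_iff] at hx
    rw [← hxv, ZMod.isUnit_iff_coprime]
    exact Nat.Coprime.pow_right _ ((Nat.Prime.coprime_iff_not_dvd hp.out).mpr hx).symm
  have hfact : (z - 1) * (z + 1) = 0 := by linear_combination h1
  have hf2 : (2 : ZMod p) ≠ 0 := by
    have hnd : ¬ (p ∣ 2) := fun hd =>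
      hp2 ((Nat.prime_dvd_prime_iff_eq hp.out Nat.prime_two).mp hd)
    have := (ZMod.natCast_eq_zero_iff 2 p).not.mpr hnd
    simpa using this
  have hmul : f (z - 1) * f (z + 1) = 0 := by
    rw [← map_mul, hfact, map_zero]
  have hdiff : f (z + 1) = f (z - 1) + 2 := by
    have : (z + 1) = (z - 1) + 2 := by ring
    rw [this, map_add, map_ofNat]
  rcases mul_eq_zero.mp hmul with hA | hB
  · have hne : f (z + 1) ≠ 0 := by rw [hdiff, hA, zero_add]; exact hf2
    have hu := hunit _ hne
    have hz1 : z - 1 = 0 := (IsUnit.mul_left_eq_zero hu).mp hfact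
    exact absurd (by linear_combination hz1) h2
  · have hne : f (z - 1) ≠ 0 := by
      intro h0
      rw [hdiff, h0, zero_add] at hB
      exact hf2 hB
    have hu := hunit _ hne
    have hz1 : z + 1 = 0 := (IsUnit.mul_right_eq_zero hu).mp hfact
    linear_combination hz1

theorem stmt17 (b N : ℕ) (h : MidyPsp b N) : StrongPsp b N := by
  obtain ⟨hodd, hN1, hnp, hcop, hcoord, hord⟩ := h
  haveI : NeZero N := ⟨by omega⟩
  set d := ord b N with hd
  have hbu : IsUnit ((b : ℕ) : ZMod N) := (ZMod.isUnit_iff_coprime b N).mpr hcop.symm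
  have hdpos : 0 < d := by
    obtain ⟨u, hu⟩ := hbu
    rw [hd, ord, ← hu, orderOf_units]
    exact orderOf_pos u
  have hN2 : ¬ (2 ∣ N) := by
    rw [Nat.odd_iff] at hodd; omega
  -- every prime divisor is ≡ 1 mod d
  have hdvd1 : ∀ p : ℕ, p.Prime → p ∣ N → d ∣ p - 1 := by
    intro p hp hpN
    haveI : Fact p.Prime := ⟨hp⟩
    have hbp : ((b : ℕ) : ZMod p) ≠ 0 := by
      rw [Ne, ZMod.natCast_eq_zero_iff]
      intro hdv
      have h1 : p ∣ Nat.gcd N b := Nat.dvd_gcd hpN hdv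
      rw [hcop] at h1
      exact hp.one_lt.ne' (Nat.dvd_one.mp h1)
    have hop : ord b p ∣ p - 1 :=
      orderOf_dvd_of_pow_eq_one (ZMod.pow_card_sub_one_eq_one hbp)
    rw [← hord p hp hpN] at hop
    exact hop
  have hNd : N ≡ 1 [MOD d] := by
    refine modeq_one_of_primes d N (by omega) fun p hp hpN => ?_
    exact ((Nat.modEq_iff_dvd' hp.one_le).mpr (hdvd1 p hp hpN)).symm
  have hdN1 : d ∣ N - 1 := (Nat.modEq_iff_dvd' (by omega)).mp hNd.symm
  set r := padicValNat 2 (N - 1) with hr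
  set s := (N - 1) / 2 ^ r with hs
  have hN1pos : 0 < N - 1 := by omega
  have hfac : (N - 1).factorization 2 = r := Nat.factorization_def _ Nat.prime_two
  have hNs : N - 1 = 2 ^ r * s := by
    have := Nat.ordProj_mul_ordCompl_eq_self (N - 1) 2
    rw [hfac] at this
    exact this.symm
  have hsodd : ¬ (2 ∣ s) := by
    have := Nat.not_dvd_ordCompl Nat.prime_two (by omega : N - 1 ≠ 0)
    rwa [hfac] at this
  have hspos : s ≠ 0 := by
    intro h0; rw [h0, mul_zero] at hNs; omega
  obtain ⟨e, t, hdt, htodd⟩ : ∃ e t, d = 2 ^ e * t ∧ ¬ (2 ∣ t) := by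
    have hfacd : d.factorization 2 = padicValNat 2 d := Nat.factorization_def _ Nat.prime_two
    refine ⟨padicValNat 2 d, d / 2 ^ padicValNat 2 d, ?_, ?_⟩
    · have := Nat.ordProj_mul_ordCompl_eq_self d 2
      rw [hfacd] at this
      exact this.symm
    · have := Nat.not_dvd_ordCompl Nat.prime_two hdpos.ne'
      rwa [hfacd] at this
  have htpos : 0 < t := by
    rcases Nat.eq_zero_or_pos t with h0 | h0
    · rw [h0, mul_zero] at hdt; omega
    · exact h0
  have hcop2t : Nat.Coprime t 2 :=
    ((Nat.Prime.coprime_iff_not_dvd Nat.prime_two).mpr htodd).symm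
  have hts : t ∣ s := by
    have h1 : t ∣ N - 1 := dvd_trans ⟨2 ^ e, by rw [hdt]; ring⟩ hdN1
    rw [hNs] at h1
    exact (hcop2t.pow_right r).dvd_of_dvd_mul_left h1
  have hgcd : Nat.gcd d s = t := by
    apply Nat.dvd_antisymm
    · have hg2 : ¬ (2 ∣ Nat.gcd d s) := fun h2 => hsodd (h2.trans (Nat.gcd_dvd_right d s))
      have hcg : Nat.Coprime (Nat.gcd d s) (2 ^ e) :=
        (((Nat.Prime.coprime_iff_not_dvd Nat.prime_two).mpr hg2).symm).pow_right e
      have h5 : Nat.gcd d s ∣ 2 ^ e * t := by rw [← hdt]; exact Nat.gcd_dvd_left d s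
      exact hcg.dvd_of_dvd_mul_left h5
    · exact Nat.dvd_gcd ⟨2 ^ e, by rw [hdt]; ring⟩ hts
  -- order of b mod every prime power dividing N is d
  have hordpk : ∀ p k : ℕ, p.Prime → k ≠ 0 → p ^ k ∣ N → ord b (p ^ k) = d := by
    intro p k hp hk hdvd
    apply Nat.dvd_antisymm
    · exact ord_dvd_of_dvd b (p ^ k) N hdvd
    · have h1 := ord_dvd_of_dvd b p (p ^ k) (dvd_pow_self p hk)
      rwa [← hord p hp ((dvd_pow_self p hk).trans hdvd)] at h1
  rcases Nat.eq_zero_or_pos e with he0 | hepos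
  · -- e = 0 : b^s ≡ 1 mod N
    refine ⟨hodd, hN1, hnp, hcop, Or.inl ?_⟩
    have hds : d ∣ s := by
      have h1 : d ∣ N - 1 := hdN1
      rw [hNs] at h1
      have hcd : Nat.Coprime d (2 ^ r) := by
        rw [hdt, he0, pow_zero, one_mul]
        exact hcop2t.pow_right r
      exact hcd.dvd_of_dvd_mul_left h1
    have hpow : ((b : ℕ) : ZMod N) ^ s = 1 := orderOf_dvd_iff_pow_eq_one.mp hds
    rw [← ZMod.natCast_eq_natCast_iff]
    push_cast
    exact hpow
  · -- e ≥ 1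
    obtain ⟨i, rfl⟩ : ∃ i, e = i + 1 := ⟨e - 1, by omega⟩
    have h2eN1 : 2 ^ (i + 1) ∣ N - 1 := dvd_trans ⟨t, hdt⟩ hdN1
    have hier : i + 1 ≤ r := by
      rw [hNs] at h2eN1
      have hcs : Nat.Coprime (2 ^ (i + 1)) s :=
        (((Nat.Prime.coprime_iff_not_dvd Nat.prime_two).mpr hsodd)).pow_left _
      have := hcs.dvd_of_dvd_mul_right h2eN1
      exact (Nat.pow_dvd_pow_iff_le_right one_lt_two).mp this
    -- the main claim mod every divisor of N
    have main : ∀ m : ℕ, m ∣ N → ((b : ℕ) : ZMod m) ^ (2 ^ i * s) = -1 := by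
      intro m
      induction m using Nat.recOnPosPrimePosCoprime with
      | prime_pow p k hp hk =>
        intro hdvd
        haveI : Fact p.Prime := ⟨hp⟩
        have hpN : p ∣ N := (dvd_pow_self p hk.ne').trans hdvd
        have hp2 : p ≠ 2 := fun hpe => hN2 (hpe ▸ hpN)
        have hom : ord b (p ^ k) = d := hordpk p k hp hk.ne' hdvd
        have hy : orderOf (((b : ℕ) : ZMod (p ^ k)) ^ s) = 2 ^ (i + 1) := by
          rw [orderOf_pow' _ hspos]
          show ord b (p ^ k) / Nat.gcd (ord b (p ^ k)) s = 2 ^ (i + 1)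
          rw [hom, hgcd, hdt, Nat.mul_div_cancel _ htpos]
        have hrw : ((b : ℕ) : ZMod (p ^ k)) ^ (2 ^ i * s)
            = (((b : ℕ) : ZMod (p ^ k)) ^ s) ^ (2 ^ i) := by
          rw [← pow_mul, mul_comm]
        have hsq : (((b : ℕ) : ZMod (p ^ k)) ^ (2 ^ i * s)) ^ 2 = 1 := by
          rw [hrw, ← pow_mul]
          have h2 : 2 ^ i * 2 = 2 ^ (i + 1) := by rw [pow_succ]
          rw [h2, ← hy]
          exact pow_orderOf_eq_one _
        have hne1 : ((b : ℕ) : ZMod (p ^ k)) ^ (2 ^ i * s) ≠ 1 := by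
          rw [hrw]
          intro h1
          have := orderOf_dvd_of_pow_eq_one h1
          rw [hy] at this
          have := (Nat.pow_dvd_pow_iff_le_right one_lt_two).mp this
          omega
        exact eq_neg_one_of_sq p k hp2 hk.ne' _ hsq hne1
      | zero =>
        intro hdvd
        exact absurd (Nat.eq_zero_of_zero_dvd hdvd) (by omega)
      | one =>
        intro _
        exact Subsingleton.elim _ _
      | coprime a c ha hc hco Pa Pc =>
        intro hdvd
        have haN : a ∣ N := (dvd_mul_right a c).trans hdvd
        have hcN : c ∣ N := (dvd_mul_left c a).trans hdvd
        apply (ZMod.chineseRemainder hco).injective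
        rw [map_pow, map_natCast, map_neg, map_one]
        apply Prod.ext
        · simpa using Pa haN
        · simpa using Pc hcN
    refine ⟨hodd, hN1, hnp, hcop, Or.inr ⟨i, by omega, ?_⟩⟩
    exact main N dvd_rfl
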